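/- Let R be a ring with only trivial idempotents and σ a ring endomorphism of R with σ(1) = 1. Then the skew polynomial ring R[x; σ] is i-reversible; in fact, every non-zero idempotent of R[x; σ] equals 1. -/

import Mathlib

/-- A ring is *i-reversible* if whenever `a * b` is a non-zero idempotent, `b * a` is an
idempotent. -/
def IsIReversible (S : Type*) [Ring S] : Prop :=
  ∀ a b : S, IsIdempotentElem (a * b) → a * b ≠ 0 → IsIdempotentElem (b * a)

/-- A ring has only trivial idempotents if its only idempotents are `0` and `1`. -/
def HasOnlyTrivialIdempotents (S : Type*) [Ring S] : Prop :=
  ∀ e : S, IsIdempotentElem e → e = 0 ∨ e = 1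

/-- The skew polynomial ring `R[x; σ]`: left polynomials over `R` (represented as finitely
supported coefficient functions `ℕ →₀ R`), with multiplication determined by the rule
`x * b = σ b * x`, i.e. `(a xⁱ) * (b xʲ) = (a * σⁱ b) x^(i + j)`. Note that `σ`, being a
ring homomorphism, satisfies `σ 1 = 1`. -/
def SkewPolyRing (R : Type*) [Ring R] (σ : R →+* R) : Type _ := ℕ →₀ R

namespace SkewPolyRing

variable {R : Type*} [Ring R] {σ : R →+* R}

noncomputable instance : AddCommGroup (SkewPolyRing R σ) :=
  inferInstanceAs (AddCommGroup (ℕ →₀ R))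

noncomputable instance : Mul (SkewPolyRing R σ) :=
  ⟨fun p q => Finsupp.sum p fun i a => Finsupp.sum q fun j b =>
    Finsupp.single (i + j) (a * (⇑σ)^[i] b)⟩

noncomputable instance : One (SkewPolyRing R σ) := ⟨Finsupp.single 0 (1 : R)⟩

lemma mul_def (p q : SkewPolyRing R σ) :
    p * q = Finsupp.sum p fun i a => Finsupp.sum q fun j b =>
      Finsupp.single (i + j) (a * (⇑σ)^[i] b) := rfl

noncomputable instance : Ring (SkewPolyRing R σ) :=
  { (inferInstance : AddCommGroup (SkewPolyRing R σ)),
    (inferInstance : Mul (SkewPolyRing R σ)),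
    (inferInstance : One (SkewPolyRing R σ)) with
    mul_assoc := by
      intro (p : (ℕ →₀ R)) (q : (ℕ →₀ R)) (r : (ℕ →₀ R))
      show (Finsupp.sum (Finsupp.sum p fun i a => Finsupp.sum q fun j b =>
          Finsupp.single (i + j) (a * (⇑σ)^[i] b)) fun k c => Finsupp.sum r fun l d =>
          Finsupp.single (k + l) (c * (⇑σ)^[k] d)) =
        (Finsupp.sum p fun i a => Finsupp.sum (Finsupp.sum q fun j b =>
          Finsupp.sum r fun l d => Finsupp.single (j + l) (b * (⇑σ)^[j] d)) fun j b =>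
          Finsupp.single (i + j) (a * (⇑σ)^[i] b))
      rw [Finsupp.sum_sum_index (fun i => by simp [Finsupp.sum])
        (fun i b₁ b₂ => by
          rw [← Finsupp.sum_add]
          congr 1; ext l d
          simp [add_mul, Finsupp.single_add])]
      refine Finsupp.sum_congr fun i _ => ?_
      rw [Finsupp.sum_sum_index (fun j => by simp [Finsupp.sum])
        (fun j b₁ b₂ => by
          rw [← Finsupp.sum_add]
          congr 1; ext l d
          simp [add_mul, Finsupp.single_add]),
        Finsupp.sum_sum_index (fun j => by simp)
        (fun j b₁ b₂ => by simp [iterate_map_add, mul_add, Finsupp.single_add])]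
      refine Finsupp.sum_congr fun j _ => ?_
      rw [Finsupp.sum_single_index (by simp [Finsupp.sum]),
        Finsupp.sum_sum_index (fun l => by simp)
          (fun l b₁ b₂ => by simp [iterate_map_add, mul_add, Finsupp.single_add])]
      refine Finsupp.sum_congr fun l _ => ?_
      rw [Finsupp.sum_single_index (by simp)]
      rw [add_assoc, Function.iterate_add_apply, iterate_map_mul, mul_assoc]
    one_mul := by
      intro (p : (ℕ →₀ R))
      show (Finsupp.sum (Finsupp.single 0 (1 : R)) fun i a => Finsupp.sum p fun j b =>
        Finsupp.single (i + j) (a * (⇑σ)^[i] b)) = p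
      rw [Finsupp.sum_single_index]
      · simp [Finsupp.sum_single]
      · simp [Finsupp.sum]
    mul_one := by
      intro (p : (ℕ →₀ R))
      show (Finsupp.sum p fun i a => Finsupp.sum (Finsupp.single 0 (1 : R)) fun j b =>
        Finsupp.single (i + j) (a * (⇑σ)^[i] b)) = p
      have : (Finsupp.sum p fun i a => Finsupp.sum (Finsupp.single 0 (1 : R)) fun j b =>
          Finsupp.single (i + j) (a * (⇑σ)^[i] b)) = Finsupp.sum p fun i a =>
            Finsupp.single i a := by
        refine Finsupp.sum_congr fun i _ => ?_
        rw [Finsupp.sum_single_index (by simp)]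
        simp [iterate_map_one]
      rw [this, Finsupp.sum_single]
    left_distrib := by
      intro (p : (ℕ →₀ R)) (q : (ℕ →₀ R)) (r : (ℕ →₀ R))
      show (Finsupp.sum p fun i a => Finsupp.sum (q + r) fun j b =>
          Finsupp.single (i + j) (a * (⇑σ)^[i] b)) =
        (Finsupp.sum p fun i a => Finsupp.sum q fun j b =>
          Finsupp.single (i + j) (a * (⇑σ)^[i] b)) +
        (Finsupp.sum p fun i a => Finsupp.sum r fun j b =>
          Finsupp.single (i + j) (a * (⇑σ)^[i] b))
      rw [← Finsupp.sum_add]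
      congr 1
      ext i a
      rw [Finsupp.sum_add_index (by simp)
        (by intro j _ b₁ b₂; simp [mul_add, Finsupp.single_add])]
    right_distrib := by
      intro (p : (ℕ →₀ R)) (q : (ℕ →₀ R)) (r : (ℕ →₀ R))
      show (Finsupp.sum (p + q) fun i a => Finsupp.sum r fun j b =>
          Finsupp.single (i + j) (a * (⇑σ)^[i] b)) =
        (Finsupp.sum p fun i a => Finsupp.sum r fun j b =>
          Finsupp.single (i + j) (a * (⇑σ)^[i] b)) +
        (Finsupp.sum q fun i a => Finsupp.sum r fun j b =>
          Finsupp.single (i + j) (a * (⇑σ)^[i] b))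
      rw [Finsupp.sum_add_index (by simp [Finsupp.sum]) ?_]
      intro i _ a₁ a₂
      rw [← Finsupp.sum_add]
      congr 1
      ext j b
      simp [add_mul, Finsupp.single_add]
    zero_mul := by
      intro a
      show Finsupp.sum 0 _ = 0
      simp [Finsupp.sum_zero_index]
    mul_zero := by
      intro (a : (ℕ →₀ R))
      show Finsupp.sum a _ = 0
      exact Finset.sum_eq_zero fun i _ => Finsupp.sum_zero_index }

end SkewPolyRing

namespace SkewPolyRing

variable {R : Type*} [Ring R] {σ : R →+* R}

/-- View a skew polynomial as its underlying finitely supported function. -/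
def toF (p : SkewPolyRing R σ) : ℕ →₀ R := p

/-- The `n`-th coefficient of a skew polynomial. -/
def coeff (p : SkewPolyRing R σ) (n : ℕ) : R := toF p n

lemma coeff_zero (n : ℕ) : coeff (0 : SkewPolyRing R σ) n = 0 := rfl

lemma coeff_sub (p q : SkewPolyRing R σ) (n : ℕ) :
    coeff (p - q) n = coeff p n - coeff q n := by
  change (toF p - toF q) n = toF p n - toF q n
  exact Finsupp.sub_apply _ _ _

lemma coeff_neg (p : SkewPolyRing R σ) (n : ℕ) :
    coeff (-p) n = - coeff p n := by
  change (-(toF p)) n = -(toF p n)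
  exact Finsupp.neg_apply _ _

lemma coeff_one (n : ℕ) :
    coeff (1 : SkewPolyRing R σ) n = if n = 0 then 1 else 0 := by
  change (Finsupp.single 0 (1 : R)) n = _
  rw [Finsupp.single_apply]
  simp [eq_comm]

lemma ext_coeff {p q : SkewPolyRing R σ} (hc : ∀ n, coeff p n = coeff q n) : p = q :=
  Finsupp.ext hc

lemma coeff_mul (p q : SkewPolyRing R σ) (n : ℕ) :
    coeff (p * q) n = ∑ i ∈ (toF p).support, ∑ j ∈ (toF q).support,
      if i + j = n then coeff p i * (⇑σ)^[i] (coeff q j) else 0 := by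
  change (Finsupp.sum (toF p) fun i a => Finsupp.sum (toF q) fun j b =>
      Finsupp.single (i + j) (a * (⇑σ)^[i] b)) n = _
  rw [Finsupp.sum_apply]
  unfold Finsupp.sum
  refine Finset.sum_congr rfl fun i _ => ?_
  dsimp only
  rw [Finset.sum_apply']
  refine Finset.sum_congr rfl fun j _ => ?_
  rw [Finsupp.single_apply]
  simp [eq_comm, coeff]

lemma coeff_mul_zero (p q : SkewPolyRing R σ) :
    coeff (p * q) 0 = coeff p 0 * coeff q 0 := by
  rw [coeff_mul]
  have hin : ∀ i, (∑ j ∈ (toF q).support,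
      if i + j = 0 then coeff p i * (⇑σ)^[i] (coeff q j) else 0) =
      if i = 0 then coeff p 0 * coeff q 0 else 0 := by
    intro i
    rcases eq_or_ne i 0 with rfl | hi
    · rw [if_pos rfl, Finset.sum_eq_single 0]
      · simp
      · intro j _ hj
        simp [hj]
      · intro h0
        have hq : coeff q 0 = 0 := Finsupp.notMem_support_iff.mp h0
        simp [hq]
    · have hnz : ∀ j, i + j ≠ 0 := fun j => by omega
      simp [hnz, hi]
  refine Eq.trans (Finset.sum_congr rfl fun i _ => hin i) ?_
  by_cases h0 : (0 : ℕ) ∈ (toF p).support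
  · simp [Finset.sum_ite_eq', h0]
  · have : coeff p 0 = 0 := Finsupp.notMem_support_iff.mp h0
    simp [Finset.sum_ite_eq', h0, this]

lemma coeff_mul_eq_zero (p q : SkewPolyRing R σ) (n : ℕ)
    (h : ∀ i j, i + j = n → coeff p i * (⇑σ)^[i] (coeff q j) = 0) :
    coeff (p * q) n = 0 := by
  rw [coeff_mul]
  apply Finset.sum_eq_zero
  intro i _
  apply Finset.sum_eq_zero
  intro j _
  split_ifs with hij
  · exact h i j hij
  · rfl

/-- Coefficient of `p * p` at the minimal index of the support vanishes when the constant
term of `p` vanishes. -/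
lemma coeff_sq_min {p : SkewPolyRing R σ} {n : ℕ}
    (hmin : ∀ m < n, coeff p m = 0) (h0 : coeff p 0 = 0) :
    coeff (p * p) n = 0 := by
  apply coeff_mul_eq_zero
  intro i j hij
  have hile : i ≤ n := by omega
  rcases lt_or_eq_of_le hile with hi | hi
  · rw [hmin i hi, zero_mul]
  · have hj : j = 0 := by omega
    rw [hj, h0, Function.iterate_fixed (map_zero σ) i, mul_zero]

end SkewPolyRing

open SkewPolyRing in
/-- If `R` has only trivial idempotents and `σ` is a (unital) ring endomorphism of `R`, then
the skew polynomial ring `R[x; σ]` is i-reversible; in fact every non-zero idempotent of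
`R[x; σ]` is equal to `1`. -/
theorem skewPolynomial_isIReversible (R : Type*) [Ring R] (σ : R →+* R)
    (h : HasOnlyTrivialIdempotents R) :
    IsIReversible (SkewPolyRing R σ) ∧
      ∀ p : SkewPolyRing R σ, IsIdempotentElem p → p ≠ 0 → p = 1 := by
  have key : ∀ p : SkewPolyRing R σ, IsIdempotentElem p → p ≠ 0 → p = 1 := by
    intro p hp hne
    classical
    have hc0 : IsIdempotentElem (coeff p 0) := by
      have h2 := coeff_mul_zero p p
      rw [hp] at h2
      exact h2.symm
    rcases h _ hc0 with h0 | h1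
    · exfalso
      have hex : ∃ n, coeff p n ≠ 0 := by
        by_contra hall
        push_neg at hall
        exact hne (ext_coeff fun n => by rw [hall n, coeff_zero])
      set n := Nat.find hex with hn
      have hpn : coeff p n ≠ 0 := Nat.find_spec hex
      have hmin : ∀ m < n, coeff p m = 0 := by
        intro m hm
        by_contra hc
        exact absurd (Nat.find_le hc) (not_le.mpr hm)
      have hz : coeff (p * p) n = 0 := coeff_sq_min hmin h0
      rw [hp] at hz
      exact hpn hz
    · set q : SkewPolyRing R σ := p - 1 with hq
      have hq0 : coeff q 0 = 0 := by
        rw [hq, coeff_sub, coeff_one, h1]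
        simp
      have hsq : q * q = -q := by
        rw [hq, mul_sub, sub_mul, sub_mul, hp, mul_one, one_mul, mul_one]
        abel
      by_contra hne1
      have hqne : q ≠ 0 := fun hz => hne1 (by rw [← sub_eq_zero]; exact hz)
      have hex : ∃ n, coeff q n ≠ 0 := by
        by_contra hall
        push_neg at hall
        exact hqne (ext_coeff fun n => by rw [hall n, coeff_zero])
      set n := Nat.find hex with hn
      have hqn : coeff q n ≠ 0 := Nat.find_spec hex
      have hmin : ∀ m < n, coeff q m = 0 := by
        intro m hm
        by_contra hc
        exact absurd (Nat.find_le hc) (not_le.mpr hm)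
      have hz : coeff (q * q) n = 0 := coeff_sq_min hmin hq0
      rw [hsq, coeff_neg, neg_eq_zero] at hz
      exact hqn hz
  refine ⟨?_, key⟩
  intro a b hab hne
  have hab1 : a * b = 1 := key _ hab hne
  show b * a * (b * a) = b * a
  rw [mul_assoc, ← mul_assoc a b a, hab1, one_mul]
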